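/- Suppose the matrices M_1,…,M_r satisfy conditions (H0), (H1) and (H2). Fix j ≠ k in {1,…,r}. Let v ∈ W_{e_k} and let w ∈ W_m with m_j = 0 and t(v) = o(w), so that the product vw ∈ W_{m+e_k} exists. Then A(j, vw) = {a ∈ A : M_j(a, o(v)) = 1 and there exists b ∈ A(j,w) with M_k(b,a) = 1}. -/

import Mathlib

open Matrix

variable {r : ℕ} {A : Type*}

/-- The `j`-th standard basis vector of `ℤ^r`. -/
def evec (r : ℕ) (j : Fin r) : Fin r → ℤ := fun i => if i = j then 1 else 0

/-- `w` represents a word of shape `m` (only its values on `[0,m]` matter):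
`m ≥ 0` and the transition matrices are respected on the box `[0,m]`. -/
def IsWord (M : Fin r → Matrix A A ℤ) (m : Fin r → ℤ) (w : (Fin r → ℤ) → A) : Prop :=
  0 ≤ m ∧ ∀ (l : Fin r → ℤ) (j : Fin r), 0 ≤ l → l + evec r j ≤ m →
    M j (w (l + evec r j)) (w l) = 1

/-- Two representing functions agree on the box `[0,m]`; this is equality of
words of shape `m`. -/
def AgreeOn (m : Fin r → ℤ) (w w' : (Fin r → ℤ) → A) : Prop :=
  ∀ l : Fin r → ℤ, 0 ≤ l → l ≤ m → w l = w' l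

/-- The restriction `w|[k,k+n]`, as a word based at `0`: `(restrictW k w) i = w (i + k)`. -/
def restrictW (k : Fin r → ℤ) (w : (Fin r → ℤ) → A) : (Fin r → ℤ) → A :=
  fun i => w (i + k)

/-- `w` (a word of shape `m`) is `p`-periodic: the translate `τ_p w`, given by
`(τ_p w)(x) = w (x - p)`, agrees with `w` on `[0,m] ∩ [p,p+m]`. -/
def IsPeriodic (p m : Fin r → ℤ) (w : (Fin r → ℤ) → A) : Prop :=
  ∀ x : Fin r → ℤ, 0 ≤ x → x ≤ m → p ≤ x → x ≤ p + m → w (x - p) = w x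

/-- Condition (H0): each `M j` is nonzero. -/
def H0 (M : Fin r → Matrix A A ℤ) : Prop := ∀ j, M j ≠ 0

/-- Condition (H1): unique products of words. -/
def H1 (M : Fin r → Matrix A A ℤ) : Prop :=
  ∀ (m n : Fin r → ℤ) (u v : (Fin r → ℤ) → A),
    IsWord M m u → IsWord M n v → u m = v 0 →
      (∃ w, IsWord M (m + n) w ∧ AgreeOn m w u ∧ AgreeOn n (restrictW m w) v) ∧
      (∀ w w', IsWord M (m + n) w → AgreeOn m w u → AgreeOn n (restrictW m w) v →
        IsWord M (m + n) w' → AgreeOn m w' u → AgreeOn n (restrictW m w') v →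
        AgreeOn (m + n) w w')

/-- Condition (H2): the directed graph on `A` with an edge `a → b` whenever
`M i b a = 1` for some `i` is irreducible. -/
def H2 (M : Fin r → Matrix A A ℤ) : Prop :=
  ∀ a b : A, Relation.ReflTransGen (fun x y => ∃ i, M i y x = 1) a b

/-- Condition (H3): for each nonzero `p ∈ ℤ^r` there is a non-`p`-periodic word. -/
def H3 (M : Fin r → Matrix A A ℤ) : Prop :=
  ∀ p : Fin r → ℤ, p ≠ 0 → ∃ (m : Fin r → ℤ) (w : (Fin r → ℤ) → A),
    IsWord M m w ∧ ¬ IsPeriodic p m w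

/-- Condition (H1a): the matrices commute. -/
def H1a [Fintype A] (M : Fin r → Matrix A A ℤ) : Prop :=
  ∀ i j, M i * M j = M j * M i

/-- Condition (H1b): for `i < j`, the entries of `M i * M j` lie in `{0,1}`. -/
def H1b [Fintype A] (M : Fin r → Matrix A A ℤ) : Prop :=
  ∀ i j, i < j → ∀ a b : A, (M i * M j) b a = 0 ∨ (M i * M j) b a = 1

/-- Condition (H1c): for `i < j < k`, the entries of `M i * M j * M k` lie in `{0,1}`. -/
def H1c [Fintype A] (M : Fin r → Matrix A A ℤ) : Prop :=
  ∀ i j k, i < j → j < k → ∀ a b : A,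
    (M i * M j * M k) b a = 0 ∨ (M i * M j * M k) b a = 1

/-- Condition (H3*). -/
def H3star (M : Fin r → Matrix A A ℤ) : Prop :=
  ∀ (j : Fin r) (m : Fin r → ℤ), m j = 0 → ∀ w : (Fin r → ℤ) → A, IsWord M m w →
    ∃ u u', IsWord M (m + evec r j) u ∧ IsWord M (m + evec r j) u' ∧
      AgreeOn m u w ∧ AgreeOn m u' w ∧ u (evec r j) ≠ u' (evec r j)

/-- `x` represents the product word `uv` of `u ∈ W_m` and `v ∈ W_n`. -/
def IsProd (M : Fin r → Matrix A A ℤ) (m n : Fin r → ℤ)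
    (u v x : (Fin r → ℤ) → A) : Prop :=
  IsWord M (m + n) x ∧ AgreeOn m x u ∧ AgreeOn n (restrictW m x) v

/-- The set `A(j,w)` of possible values `u (e_j)` over extensions
`u ∈ W_{m+e_j}` of `w ∈ W_m`. -/
def ASet (M : Fin r → Matrix A A ℤ) (j : Fin r) (m : Fin r → ℤ)
    (w : (Fin r → ℤ) → A) : Set A :=
  {a | ∃ u : (Fin r → ℤ) → A,
    IsWord M (m + evec r j) u ∧ AgreeOn m u w ∧ u (evec r j) = a}

section Helpers

variable {M : Fin r → Matrix A A ℤ}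

lemma le_apply {f g : Fin r → ℤ} (h : f ≤ g) (i : Fin r) : f i ≤ g i := h i

lemma pi_le {f g : Fin r → ℤ} (h : ∀ i, f i ≤ g i) : f ≤ g := h

lemma evec_self (j : Fin r) : evec r j j = 1 := if_pos rfl

lemma evec_ne {i j : Fin r} (h : i ≠ j) : evec r j i = 0 := if_neg h

lemma evec_nonneg (j : Fin r) : (0 : Fin r → ℤ) ≤ evec r j :=
  pi_le fun i => by
    rw [Pi.zero_apply]; unfold evec; split <;> omega

lemma isWord_mono {s n : Fin r → ℤ} {U : (Fin r → ℤ) → A} (h : IsWord M n U)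
    (hs0 : 0 ≤ s) (hsn : s ≤ n) : IsWord M s U :=
  ⟨hs0, fun l i hl hle => h.2 l i hl (le_trans hle hsn)⟩

lemma isWord_restrict {c s n : Fin r → ℤ} {U : (Fin r → ℤ) → A} (h : IsWord M n U)
    (hc : 0 ≤ c) (hs : 0 ≤ s) (hcs : c + s ≤ n) : IsWord M s (restrictW c U) := by
  refine ⟨hs, fun l i hl hle => ?_⟩
  have key : l + evec r i + c ≤ n :=
    le_trans (add_le_add_left hle c) (by rwa [add_comm c s] at hcs)
  have h1 : restrictW c U (l + evec r i) = U (l + c + evec r i) := by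
    show U (l + evec r i + c) = _
    rw [add_right_comm]
  rw [h1]
  exact h.2 (l + c) i (add_nonneg hl hc) (by rwa [add_right_comm] at key)

lemma box_evec {k : Fin r} {l : Fin r → ℤ} (h0 : 0 ≤ l) (h1 : l ≤ evec r k) :
    l = 0 ∨ l = evec r k := by
  have hk0 : (0 : ℤ) ≤ l k := le_apply h0 k
  have hk1 : l k ≤ evec r k k := le_apply h1 k
  rw [evec_self] at hk1
  have hcases : l k = 0 ∨ l k = 1 := by omega
  rcases hcases with h | h
  · left; funext i
    by_cases hik : i = k
    · rw [hik, Pi.zero_apply, h]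
    · have h1' : l i ≤ evec r k i := le_apply h1 i
      have h0' : (0 : ℤ) ≤ l i := le_apply h0 i
      rw [evec_ne hik] at h1'
      rw [Pi.zero_apply]
      omega
  · right; funext i
    by_cases hik : i = k
    · rw [hik, evec_self, h]
    · have h1' : l i ≤ evec r k i := le_apply h1 i
      have h0' : (0 : ℤ) ≤ l i := le_apply h0 i
      rw [evec_ne hik] at h1' ⊢
      omega

/-- The edge word in direction `i` from `a` to `b`. -/
def edgeW (i : Fin r) (a b : A) : (Fin r → ℤ) → A := fun l => if l i = 0 then a else b

lemma edgeW_zero (i : Fin r) (a b : A) : edgeW i a b 0 = a := by simp [edgeW]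

lemma edgeW_evec (i : Fin r) (a b : A) : edgeW i a b (evec r i) = b := by
  simp [edgeW, evec_self]

lemma edgeW_isWord {i : Fin r} {a b : A} (hi : M i b a = 1) :
    IsWord M (evec r i) (edgeW i a b) := by
  refine ⟨evec_nonneg i, fun l i' hl hle => ?_⟩
  have ha : l i' + evec r i' i' ≤ evec r i i' := le_apply hle i'
  have hb : (0 : ℤ) ≤ l i' := le_apply hl i'
  rw [evec_self] at ha
  by_cases hii : i' = i
  · rw [hii] at ha hb ⊢
    rw [evec_self] at ha
    have hli : l i = 0 := by omega
    have e1 : edgeW i a b l = a := by simp [edgeW, hli]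
    have e2 : edgeW i a b (l + evec r i) = b := by
      simp [edgeW, Pi.add_apply, evec_self, hli]
    rw [e1, e2]
    exact hi
  · exfalso
    rw [evec_ne hii] at ha
    omega

/-- The square word with corners `c` (at `0`), `a` (at `e_j`), `d` (at `e_k`),
`f` (at `e_j + e_k`). -/
def sqW (j k : Fin r) (c a d f : A) : (Fin r → ℤ) → A :=
  fun l => if l j = 0 then (if l k = 0 then c else d) else (if l k = 0 then a else f)

lemma sqW_isWord {j k : Fin r} (hjk : j ≠ k) {c a d f : A}
    (h1 : M j a c = 1) (h2 : M k d c = 1) (h3 : M k f a = 1) (h4 : M j f d = 1) :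
    IsWord M (evec r j + evec r k) (sqW j k c a d f) := by
  refine ⟨add_nonneg (evec_nonneg j) (evec_nonneg k), fun l i hl hle => ?_⟩
  by_cases hij : i = j
  · have ha : l j + evec r i j ≤ evec r j j + evec r k j := le_apply hle j
    have hb : (0 : ℤ) ≤ l j := le_apply hl j
    rw [hij, evec_self, evec_ne hjk] at ha
    have hlj : l j = 0 := by omega
    rw [hij]
    have e2 : sqW j k c a d f l = if l k = 0 then c else d := by simp [sqW, hlj]
    have e1 : sqW j k c a d f (l + evec r j) = if l k = 0 then a else f := by
      have hj : (l + evec r j) j = 1 := by rw [Pi.add_apply, evec_self, hlj, zero_add]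
      have hk2 : (l + evec r j) k = l k := by
        rw [Pi.add_apply, evec_ne (Ne.symm hjk), add_zero]
      simp [sqW, hj, hk2]
    rw [e1, e2]
    by_cases hlk : l k = 0
    · simp only [if_pos hlk]; exact h1
    · simp only [if_neg hlk]; exact h4
  · by_cases hik : i = k
    · have ha : l k + evec r i k ≤ evec r j k + evec r k k := le_apply hle k
      have hb : (0 : ℤ) ≤ l k := le_apply hl k
      rw [hik, evec_self, evec_ne (Ne.symm hjk)] at ha
      have hlk : l k = 0 := by omega
      rw [hik]
      have e2 : sqW j k c a d f l = if l j = 0 then c else a := by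
        by_cases hlj : l j = 0 <;> simp [sqW, hlj, hlk]
      have e1 : sqW j k c a d f (l + evec r k) = if l j = 0 then d else f := by
        have hk2 : (l + evec r k) k = 1 := by rw [Pi.add_apply, evec_self, hlk, zero_add]
        have hj2 : (l + evec r k) j = l j := by
          rw [Pi.add_apply, evec_ne hjk, add_zero]
        by_cases hlj : l j = 0 <;> simp [sqW, hk2, hj2, hlj]
      rw [e1, e2]
      by_cases hlj : l j = 0
      · simp only [if_pos hlj]; exact h2
      · simp only [if_neg hlj]; exact h3
    · exfalso
      have ha : l i + evec r i i ≤ evec r j i + evec r k i := le_apply hle i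
      have hb : (0 : ℤ) ≤ l i := le_apply hl i
      rw [evec_self, evec_ne hij, evec_ne hik] at ha
      omega

end Helpers

/-- under (H0), (H1), (H2), for `j ≠ k`, `v ∈ W_{e_k}` and
`w ∈ W_m` with `m j = 0` and `t(v) = o(w)`, the product `vw` satisfies
`A(j,vw) = {a : M j a (o v) = 1 ∧ ∃ b ∈ A(j,w), M k b a = 1}`. -/
theorem stmt_12 [Fintype A] [Nonempty A] (hr : 0 < r)
    (M : Fin r → Matrix A A ℤ)
    (hM : ∀ j (a b : A), M j b a = 0 ∨ M j b a = 1)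
    (h0 : H0 M) (h1 : H1 M) (h2 : H2 M)
    (j k : Fin r) (hjk : j ≠ k)
    (m : Fin r → ℤ) (hmj : m j = 0)
    (v w : (Fin r → ℤ) → A) (hv : IsWord M (evec r k) v) (hw : IsWord M m w)
    (hvw : v (evec r k) = w 0) :
    ∀ x : (Fin r → ℤ) → A, IsProd M (evec r k) m v w x →
      ASet M j (evec r k + m) x =
        {a : A | M j a (v 0) = 1 ∧ ∃ b ∈ ASet M j m w, M k b a = 1} := by
  intro x hx
  obtain ⟨hxw, hxv, hxr⟩ := hx
  have hm0 : (0 : Fin r → ℤ) ≤ m := hw.1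
  have hej := evec_nonneg (r := r) j
  have hek := evec_nonneg (r := r) k
  have hx0 : x 0 = v 0 := hxv 0 le_rfl hek
  ext a
  simp only [ASet, Set.mem_setOf_eq]
  constructor
  · rintro ⟨U, hU, hUx, hUa⟩
    have hb1 : (0 : Fin r → ℤ) + evec r j ≤ evec r k + m + evec r j := by
      refine pi_le fun i => ?_
      have h := le_apply hek i
      have h' := le_apply hm0 i
      rw [Pi.zero_apply] at h h'
      rw [Pi.add_apply, Pi.add_apply, Pi.add_apply, Pi.zero_apply]
      omega
    have e1 : M j (U (0 + evec r j)) (U 0) = 1 := hU.2 0 j le_rfl hb1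
    rw [zero_add, hUa] at e1
    have hU0 : U 0 = x 0 := hUx 0 le_rfl (add_nonneg hek hm0)
    rw [hU0, hx0] at e1
    refine ⟨e1, U (evec r j + evec r k), ⟨restrictW (evec r k) U, ?_, ?_, rfl⟩, ?_⟩
    · exact isWord_restrict hU hek (add_nonneg hm0 hej)
        (le_of_eq (by ring))
    · intro l hl0 hlm
      have hxl : restrictW (evec r k) U l = x (l + evec r k) := by
        show U (l + evec r k) = _
        refine hUx (l + evec r k) (add_nonneg hl0 hek) (pi_le fun i => ?_)
        have h := le_apply hlm i
        rw [Pi.add_apply, Pi.add_apply]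
        omega
      rw [hxl]
      exact hxr l hl0 hlm
    · have e2 : M k (U (evec r j + evec r k)) (U (evec r j)) = 1 := by
        refine hU.2 (evec r j) k hej (pi_le fun i => ?_)
        have h' : (0:ℤ) ≤ m i := le_apply hm0 i
        rw [Pi.add_apply, Pi.add_apply, Pi.add_apply]
        omega
      rwa [hUa] at e2
  · rintro ⟨haj, b, ⟨u, hu, huw, hub⟩, hkb⟩
    have hw0 : M k (w 0) (v 0) = 1 := by
      have := hv.2 0 k le_rfl (le_of_eq (zero_add _))
      rwa [zero_add, hvw] at this
    have hu0 : u 0 = w 0 := huw 0 le_rfl hm0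
    have hbw0 : M j b (w 0) = 1 := by
      have := hu.2 0 j le_rfl (by
        refine pi_le fun i => ?_
        have h' : (0:ℤ) ≤ m i := le_apply hm0 i
        rw [Pi.add_apply, Pi.add_apply, Pi.zero_apply]
        omega)
      rwa [zero_add, hub, hu0] at this
    -- the square word
    set q := sqW j k (v 0) a (w 0) b with hqdef
    have hq : IsWord M (evec r j + evec r k) q := sqW_isWord hjk haj hw0 hkb hbw0
    have hq0 : q 0 = v 0 := by simp [hqdef, sqW]
    have hqj : q (evec r j) = a := by
      rw [hqdef]
      show (if evec r j j = 0 then _ else _) = a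
      rw [evec_self, evec_ne (Ne.symm hjk)]
      norm_num
    have hqk : q (evec r k) = w 0 := by
      rw [hqdef]
      show (if evec r k j = 0 then (if evec r k k = 0 then _ else _) else _) = w 0
      rw [evec_self, evec_ne hjk]
      norm_num
    have hqjk : q (evec r j + evec r k) = b := by
      rw [hqdef]
      show (if (evec r j + evec r k) j = 0 then _
        else (if (evec r j + evec r k) k = 0 then _ else _)) = b
      rw [Pi.add_apply, Pi.add_apply, evec_self,
        evec_ne hjk, evec_ne (Ne.symm hjk)]
      norm_num
      rw [evec_self]
      norm_num
    -- the top part of u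
    have hu2 : IsWord M m (restrictW (evec r j) u) :=
      isWord_restrict hu hej hm0 (le_of_eq (add_comm _ _))
    have hu2b : restrictW (evec r j) u 0 = b := by
      show u (0 + evec r j) = b
      rwa [zero_add]
    -- build U = q · (top of u)
    obtain ⟨U, hUw, hUq, hUu2⟩ :=
      (h1 (evec r j + evec r k) m q (restrictW (evec r j) u) hq hu2
        (by rw [hqjk, hu2b])).1
    -- values of U on the square
    have hU0 : U 0 = v 0 := by
      rw [hUq 0 le_rfl (add_nonneg hej hek), hq0]
    have hUek : U (evec r k) = w 0 := by
      rw [hUq (evec r k) hek (pi_le fun i => by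
        have h := le_apply hej i
        rw [Pi.zero_apply] at h
        rw [Pi.add_apply]
        omega), hqk]
    have hUej : U (evec r j) = a := by
      rw [hUq (evec r j) hej (pi_le fun i => by
        have h := le_apply hek i
        rw [Pi.zero_apply] at h
        rw [Pi.add_apply]
        omega), hqj]
    have hUejk : U (evec r j + evec r k) = b := by
      rw [hUq (evec r j + evec r k) (add_nonneg hej hek) le_rfl, hqjk]
    -- the edge word from w 0 to b in direction j
    have hE : IsWord M (evec r j) (edgeW j (w 0) b) := edgeW_isWord hbw0
    -- restrictW e_k U agrees with u on [0, e_j + m]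
    have hsub : AgreeOn (evec r j + m) (restrictW (evec r k) U) u := by
      refine (h1 (evec r j) m (edgeW j (w 0) b) (restrictW (evec r j) u) hE hu2
        (by rw [edgeW_evec, hu2b])).2 (restrictW (evec r k) U) u
        ?_ ?_ ?_ ?_ ?_ (fun l _ _ => rfl)
      · exact isWord_restrict hUw hek (add_nonneg hej hm0) (le_of_eq (by ring))
      · intro l hl0 hl1
        rcases box_evec hl0 hl1 with rfl | rfl
        · show U (0 + evec r k) = _
          rw [zero_add, hUek, edgeW_zero]
        · show U (evec r j + evec r k) = _
          rw [hUejk, edgeW_evec]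
      · intro l hl0 hlm
        have hthis : restrictW (evec r j + evec r k) U l = restrictW (evec r j) u l :=
          hUu2 l hl0 hlm
        show U (l + evec r j + evec r k) = _
        rw [add_assoc]
        exact hthis
      · exact isWord_mono hu (add_nonneg hej hm0) (le_of_eq (add_comm _ _))
      · intro l hl0 hl1
        rcases box_evec hl0 hl1 with rfl | rfl
        · rw [hu0, edgeW_zero]
        · rw [hub, edgeW_evec]
    -- U agrees with x on [0, e_k + m]
    have hUv : AgreeOn (evec r k) U v := by
      intro l hl0 hl1
      rcases box_evec hl0 hl1 with rfl | rfl
      · rw [hU0]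
      · rw [hUek, hvw]
    have hUwAg : AgreeOn m (restrictW (evec r k) U) w := by
      intro l hl0 hlm
      rw [hsub l hl0 (pi_le fun i => by
        have h := le_apply hej i
        have h' := le_apply hlm i
        rw [Pi.zero_apply] at h
        rw [Pi.add_apply]
        omega)]
      exact huw l hl0 hlm
    have hUkm : IsWord M (evec r k + m) U :=
      isWord_mono hUw (add_nonneg hek hm0) (pi_le fun i => by
        have h := le_apply hej i
        rw [Pi.zero_apply] at h
        rw [Pi.add_apply, Pi.add_apply, Pi.add_apply]
        omega)
    have hUx : AgreeOn (evec r k + m) U x :=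
      (h1 (evec r k) m v w hv hw hvw).2 U x hUkm hUv hUwAg hxw hxv hxr
    exact ⟨U, isWord_mono hUw
      (add_nonneg (add_nonneg hek hm0) hej) (le_of_eq (by ring)), hUx, hUej⟩
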